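/- arXiv:2303.01074 — 3 statements merged into one kernel-verified Lean document; each statement's English description precedes it below -/
import Mathlib

section
/- Let A be a nonempty finite action set, let Δmax ≥ 0 and α ≥ 0. Consider predictive regret matching (PRM) run for T steps with an arbitrary prediction sequence p^1, …, p^T satisfying p^t ∈ [−α, α]^A for every t, against an arbitrary reward sequence x^1, …, x^T satisfying x^t_a ∈ [c, c + Δmax] for some fixed c ∈ ℝ and all t ≤ T, a ∈ A. Then the external regret after T steps satisfies R^{ext,T} = max_{a∈A} R^T_a ≤ √2 · (2·Δmax + α) · √(|A| · T). In particular the external regret is O(√T), so PRM equipped with any predictor whose outputs are bounded in [−α, α]^A is a regret minimizer. (Theorem 1, Correctness of Neural-Predicting.) -/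
open Finset

/-- Instantaneous regret vector: `r(σ, x)_a = x_a − ⟨σ, x⟩`. -/
noncomputable def instRegret {A : Type*} [Fintype A] (σ x : A → ℝ) : A → ℝ :=
  fun a => x a - ∑ b, σ b * x b

/-- Strategy obtained by normalizing a nonnegative vector `ξ`; uniform if `ξ = 0`. -/
noncomputable def stratOf {A : Type*} [Fintype A] (ξ : A → ℝ) : A → ℝ :=
  if 0 < ∑ a, ξ a then fun a => ξ a / ∑ b, ξ b
  else fun _ => (Fintype.card A : ℝ)⁻¹

section aux

variable {A : Type*} [Fintype A]

lemma stratOf_nonneg (ξ : A → ℝ) (hξ : ∀ a, 0 ≤ ξ a) (a : A) : 0 ≤ stratOf ξ a := by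
  unfold stratOf
  split_ifs with h
  · exact div_nonneg (hξ a) h.le
  · positivity

lemma stratOf_sum [Nonempty A] (ξ : A → ℝ) : ∑ a, stratOf ξ a = 1 := by
  unfold stratOf
  split_ifs with h
  · rw [← Finset.sum_div]; exact div_self (ne_of_gt h)
  · have hc : (0:ℝ) < (Fintype.card A : ℝ) := by
      exact_mod_cast Fintype.card_pos
    simp [Finset.sum_const, Finset.card_univ, nsmul_eq_mul]

lemma sum_xi_regret (ξ x : A → ℝ) (hξ : ∀ a, 0 ≤ ξ a) :
    ∑ a, ξ a * instRegret (stratOf ξ) x a = 0 := by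
  unfold instRegret stratOf
  split_ifs with h
  · have hS : (∑ b, ξ b) ≠ 0 := ne_of_gt h
    have h1 : ∑ b, ξ b / (∑ c, ξ c) * x b = (∑ b, ξ b * x b) / ∑ c, ξ c := by
      rw [Finset.sum_div]; exact Finset.sum_congr rfl (fun b _ => by ring)
    rw [h1]
    have h2 : ∑ a, ξ a * (x a - (∑ b, ξ b * x b) / ∑ c, ξ c)
        = (∑ a, ξ a * x a) - (∑ a, ξ a) * ((∑ b, ξ b * x b) / ∑ c, ξ c) := by
      simp only [mul_sub]
      rw [Finset.sum_sub_distrib, ← Finset.sum_mul]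
    rw [h2]
    field_simp
    ring
  · have hS0 : ∑ a, ξ a = 0 :=
      le_antisymm (not_lt.mp h) (Finset.sum_nonneg fun a _ => hξ a)
    have h0 := (Finset.sum_eq_zero_iff_of_nonneg (fun a _ => hξ a)).mp hS0
    simp only [Finset.mem_univ, forall_true_left] at h0
    refine Finset.sum_eq_zero fun a _ => by rw [h0 a]; ring

lemma abs_instRegret_le (σ x : A → ℝ) (hσ0 : ∀ a, 0 ≤ σ a) (hσ1 : ∑ a, σ a = 1)
    {c Δ : ℝ} (hx : ∀ a, x a ∈ Set.Icc c (c + Δ)) (a : A) :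
    |instRegret σ x a| ≤ Δ := by
  have h1 : c ≤ ∑ b, σ b * x b := by
    calc c = ∑ b, σ b * c := by rw [← Finset.sum_mul, hσ1, one_mul]
    _ ≤ _ := Finset.sum_le_sum (fun b _ => mul_le_mul_of_nonneg_left (hx b).1 (hσ0 b))
  have h2 : ∑ b, σ b * x b ≤ c + Δ := by
    calc ∑ b, σ b * x b ≤ ∑ b, σ b * (c + Δ) :=
      Finset.sum_le_sum (fun b _ => mul_le_mul_of_nonneg_left (hx b).2 (hσ0 b))
    _ = c + Δ := by rw [← Finset.sum_mul, hσ1, one_mul]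
  have h3 := hx a
  rw [Set.mem_Icc] at h3
  unfold instRegret
  rw [abs_le]
  constructor <;> linarith [h3.1, h3.2]

lemma sq_pos_part_le (u v : ℝ) :
    (max (u + v) 0)^2 ≤ (max u 0)^2 + 2 * (max u 0) * v + v^2 := by
  have h : (max u 0)^2 + 2 * (max u 0) * v + v^2 = (max u 0 + v)^2 := by ring
  rw [h]
  rcases le_or_gt (u + v) 0 with h1 | h1
  · simpa [max_eq_right h1] using sq_nonneg (max u 0 + v)
  · rw [max_eq_left h1.le]
    have : u + v ≤ max u 0 + v := by simp [le_max_iff]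
    nlinarith

end aux

/-- PRM strategy from previous cumulative regret `R` and current prediction `pt`:
`σ = [R + p]⁺ / ‖[R + p]⁺‖₁` (uniform if the positive part vanishes). -/
noncomputable def prmSigmaAux {A : Type*} [Fintype A] (pt R : A → ℝ) : A → ℝ :=
  stratOf (fun a => max (R a + pt a) 0)

/-- PRM cumulative regret: `R^0 = 0`, `R^t = R^{t−1} + r(σ^t, x^t)`. -/
noncomputable def prmR {A : Type*} [Fintype A] (p x : ℕ → A → ℝ) : ℕ → A → ℝ
  | 0 => fun _ => 0
  | t + 1 => fun a =>
      prmR p x t a + instRegret (prmSigmaAux (p (t + 1)) (prmR p x t)) (x (t + 1)) a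

/-- PRM strategy at step `t ≥ 1`. -/
noncomputable def prmSigma {A : Type*} [Fintype A] (p x : ℕ → A → ℝ) (t : ℕ) : A → ℝ :=
  prmSigmaAux (p t) (prmR p x (t - 1))

/-- **Theorem 1 (Correctness of Neural-Predicting).**
If every prediction lies in `[−α, α]^A` and every reward coordinate lies in
`[c, c + Δmax]`, then the external regret of PRM after `T` steps is at most
`√2 · (2·Δmax + α) · √(|A| · T)`. -/
theorem prm_external_regret_bound
    {A : Type*} [Fintype A] [Nonempty A]
    (Δmax α : ℝ) (hΔ : 0 ≤ Δmax) (hα : 0 ≤ α)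
    (T : ℕ) (p x : ℕ → A → ℝ) (c : ℝ)
    (hp : ∀ t, 1 ≤ t → t ≤ T → ∀ a, |p t a| ≤ α)
    (hx : ∀ t, 1 ≤ t → t ≤ T → ∀ a, x t a ∈ Set.Icc c (c + Δmax)) :
    Finset.univ.sup' Finset.univ_nonempty (fun a => prmR p x T a) ≤
      Real.sqrt 2 * (2 * Δmax + α) * Real.sqrt ((Fintype.card A : ℝ) * T) := by
  set C : ℝ := (Fintype.card A : ℝ) * (2 * α * Δmax + Δmax ^ 2) with hC
  set Φ : ℕ → ℝ := fun n => ∑ a, (max (prmR p x n a) 0) ^ 2 with hΦdef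
  have hcA : (0:ℝ) ≤ (Fintype.card A : ℝ) := Nat.cast_nonneg _
  have hstep : ∀ n, n < T → Φ (n + 1) ≤ Φ n + C := by
    intro n hn
    set R : A → ℝ := prmR p x n with hR
    set ξ : A → ℝ := fun a => max (R a + p (n+1) a) 0 with hξdef
    have hξ0 : ∀ a, 0 ≤ ξ a := fun a => le_max_right _ _
    set σ : A → ℝ := stratOf ξ with hσdef
    set r : A → ℝ := instRegret σ (x (n+1)) with hrdef
    have hRsucc : ∀ a, prmR p x (n+1) a = R a + r a := fun a => rfl
    have horth : ∑ a, ξ a * r a = 0 := sum_xi_regret ξ (x (n+1)) hξ0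
    have hrb : ∀ a, |r a| ≤ Δmax :=
      abs_instRegret_le σ (x (n+1)) (stratOf_nonneg ξ hξ0) (stratOf_sum ξ)
        (fun a => hx (n+1) (Nat.succ_le_succ (Nat.zero_le n)) hn a)
    have hdiff : ∀ a, |max (R a) 0 - ξ a| ≤ α := by
      intro a
      calc |max (R a) 0 - ξ a| ≤ |R a - (R a + p (n+1) a)| :=
            abs_max_sub_max_le_abs _ _ _
        _ = |p (n+1) a| := by rw [show R a - (R a + p (n+1) a) = -(p (n+1) a) by ring, abs_neg]
        _ ≤ α := hp (n+1) (Nat.succ_le_succ (Nat.zero_le n)) hn a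
    have h1 : Φ (n+1) ≤ Φ n + 2 * ∑ a, max (R a) 0 * r a + ∑ a, (r a)^2 := by
      have : Φ (n+1) ≤ ∑ a, ((max (R a) 0)^2 + 2 * max (R a) 0 * r a + (r a)^2) := by
        refine Finset.sum_le_sum fun a _ => ?_
        rw [hRsucc a]
        exact sq_pos_part_le (R a) (r a)
      calc Φ (n+1) ≤ _ := this
        _ = Φ n + 2 * ∑ a, max (R a) 0 * r a + ∑ a, (r a)^2 := by
          simp only [hΦdef, Finset.sum_add_distrib, Finset.mul_sum, mul_assoc]
          rfl
    have h2 : ∑ a, max (R a) 0 * r a ≤ (Fintype.card A : ℝ) * (α * Δmax) := by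
      have he : ∑ a, max (R a) 0 * r a = ∑ a, (max (R a) 0 - ξ a) * r a := by
        rw [show ∑ a, (max (R a) 0 - ξ a) * r a
            = ∑ a, max (R a) 0 * r a - ∑ a, ξ a * r a by
          rw [← Finset.sum_sub_distrib]; exact Finset.sum_congr rfl fun a _ => by ring]
        rw [horth, sub_zero]
      rw [he]
      calc ∑ a, (max (R a) 0 - ξ a) * r a ≤ ∑ _a : A, α * Δmax := by
            refine Finset.sum_le_sum fun a _ => ?_
            calc (max (R a) 0 - ξ a) * r a ≤ |(max (R a) 0 - ξ a) * r a| := le_abs_self _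
              _ = |max (R a) 0 - ξ a| * |r a| := abs_mul _ _
              _ ≤ α * Δmax := mul_le_mul (hdiff a) (hrb a) (abs_nonneg _) hα
        _ = (Fintype.card A : ℝ) * (α * Δmax) := by
            simp [Finset.sum_const, Finset.card_univ, nsmul_eq_mul]
    have h3 : ∑ a, (r a)^2 ≤ (Fintype.card A : ℝ) * Δmax^2 := by
      calc ∑ a, (r a)^2 ≤ ∑ _a : A, Δmax^2 := by
            refine Finset.sum_le_sum fun a _ => ?_
            rw [← sq_abs]
            exact pow_le_pow_left₀ (abs_nonneg _) (hrb a) 2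
        _ = (Fintype.card A : ℝ) * Δmax^2 := by
            simp [Finset.sum_const, Finset.card_univ, nsmul_eq_mul]
    calc Φ (n+1) ≤ Φ n + 2 * ∑ a, max (R a) 0 * r a + ∑ a, (r a)^2 := h1
      _ ≤ Φ n + 2 * ((Fintype.card A : ℝ) * (α * Δmax)) + (Fintype.card A : ℝ) * Δmax^2 := by
          linarith
      _ = Φ n + C := by rw [hC]; ring
  have hΦ : ∀ n, n ≤ T → Φ n ≤ n * C := by
    intro n
    induction n with
    | zero => intro _; simp [hΦdef, prmR]
    | succ k ih =>
        intro hk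
        have h1 := hstep k (Nat.lt_of_succ_le hk)
        have h2 := ih (Nat.le_of_succ_le hk)
        push_cast
        linarith
  have hΦT := hΦ T le_rfl
  refine Finset.sup'_le _ _ fun a _ => ?_
  have ha1 : prmR p x T a ≤ max (prmR p x T a) 0 := le_max_left _ _
  have ha2 : (max (prmR p x T a) 0)^2 ≤ Φ T := by
    simp only [hΦdef]
    exact Finset.single_le_sum (f := fun b => (max (prmR p x T b) 0)^2)
      (fun b _ => sq_nonneg _) (Finset.mem_univ a)
  have ha3 : max (prmR p x T a) 0 ≤ Real.sqrt (Φ T) := by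
    rw [show max (prmR p x T a) 0 = Real.sqrt ((max (prmR p x T a) 0)^2) by
      rw [Real.sqrt_sq (le_max_right _ _)]]
    exact Real.sqrt_le_sqrt ha2
  have ha4 : Real.sqrt (Φ T) ≤ Real.sqrt ((2 * (2*Δmax+α)^2) * ((Fintype.card A : ℝ) * T)) := by
    refine Real.sqrt_le_sqrt ?_
    have hT : (0:ℝ) ≤ (T:ℝ) := Nat.cast_nonneg _
    have : (T:ℝ) * C ≤ (2 * (2*Δmax+α)^2) * ((Fintype.card A : ℝ) * T) := by
      rw [hC]
      nlinarith [mul_nonneg hcA hT, mul_nonneg hα hΔ, sq_nonneg Δmax, sq_nonneg α,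
        mul_nonneg (mul_nonneg hcA hT) (mul_nonneg hα hΔ),
        mul_nonneg (mul_nonneg hcA hT) (sq_nonneg Δmax),
        mul_nonneg (mul_nonneg hcA hT) (sq_nonneg α)]
    linarith
  have ha5 : Real.sqrt ((2 * (2*Δmax+α)^2) * ((Fintype.card A : ℝ) * T))
      = Real.sqrt 2 * (2 * Δmax + α) * Real.sqrt ((Fintype.card A : ℝ) * T) := by
    rw [Real.sqrt_mul (by positivity), Real.sqrt_mul (by norm_num), Real.sqrt_sq (by linarith)]
  calc prmR p x T a ≤ max (prmR p x T a) 0 := ha1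
    _ ≤ Real.sqrt (Φ T) := ha3
    _ ≤ _ := ha4
    _ = _ := ha5
end

section
/- Let A be a nonempty finite action set. For every horizon T, every prediction sequence p^1, …, p^T ∈ ℝ^A and every reward sequence x^1, …, x^T ∈ ℝ^A, the external regret of predictive regret matching satisfies max_{a∈A} R^T_a ≤ √2 · ( Σ_{t=1}^T ‖r(σ^t, x^t) − p^t‖₂² )^{1/2}, where σ^t are the PRM iterates and ‖·‖₂ denotes the Euclidean norm on ℝ^A. (The PRM regret bound of Farina et al., Theorem 3, used in the proof of Theorem 1.) -/
open Finset

lemma ptA (u q r : ℝ) : (max (u + r) 0)^2 ≤ (max (u + q) 0 + (r - q))^2 := by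
  rcases le_or_gt (u + q) 0 with h | h
  · rw [max_eq_right h]
    rcases le_or_gt (u + r) 0 with h2 | h2
    · rw [max_eq_right h2]; nlinarith [sq_nonneg (r - q)]
    · rw [max_eq_left h2.le]; nlinarith
  · rw [max_eq_left h.le]
    rcases le_or_gt (u + r) 0 with h2 | h2
    · rw [max_eq_right h2]; nlinarith
    · rw [max_eq_left h2.le]; nlinarith

lemma ptB (u q : ℝ) : (max (u + q) 0)^2 - 2 * (max (u + q) 0) * q ≤ (max u 0)^2 := by
  rcases le_or_gt (u + q) 0 with h | h
  · rw [max_eq_right h]; nlinarith [sq_nonneg (max u 0)]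
  · rw [max_eq_left h.le]
    rcases le_or_gt u 0 with hu | hu
    · rw [max_eq_right hu]; nlinarith [sq_nonneg q]
    · rw [max_eq_left hu.le]; nlinarith [sq_nonneg q]

lemma inner_xi_regret {A : Type*} [Fintype A] (ξ x : A → ℝ) (hξ : ∀ a, 0 ≤ ξ a) :
    ∑ a, ξ a * instRegret (stratOf ξ) x a = 0 := by
  unfold instRegret stratOf
  rcases lt_or_ge 0 (∑ a, ξ a) with h | h
  · rw [if_pos h]
    have hne : (∑ c, ξ c) ≠ 0 := ne_of_gt h
    have h1 : ∑ b, ξ b / (∑ c, ξ c) * x b = (∑ b, ξ b * x b) / (∑ c, ξ c) := by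
      rw [Finset.sum_div]; exact Finset.sum_congr rfl fun b _ => by ring
    rw [h1, Finset.sum_congr rfl (fun a _ => mul_sub (ξ a) (x a) _),
      Finset.sum_sub_distrib, ← Finset.sum_mul]
    field_simp
    ring
  · have h0 : ∑ a, ξ a = 0 := le_antisymm h (Finset.sum_nonneg fun a _ => hξ a)
    have hz : ∀ a ∈ Finset.univ, ξ a = 0 :=
      (Finset.sum_eq_zero_iff_of_nonneg fun a _ => hξ a).mp h0
    exact Finset.sum_eq_zero fun a _ => by rw [hz a (Finset.mem_univ a)]; ring

lemma phi_step {A : Type*} [Fintype A] (pt x R : A → ℝ) :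
    ∑ a, (max (R a + instRegret (prmSigmaAux pt R) x a) 0)^2 ≤
      (∑ a, (max (R a) 0)^2) + ∑ a, (instRegret (prmSigmaAux pt R) x a - pt a)^2 := by
  set ξ : A → ℝ := fun a => max (R a + pt a) 0 with hξdef
  have hξ : ∀ a, 0 ≤ ξ a := fun a => le_max_right _ _
  set r : A → ℝ := instRegret (prmSigmaAux pt R) x with hrdef
  have hinner : ∑ a, ξ a * r a = 0 := inner_xi_regret ξ x hξ
  calc ∑ a, (max (R a + r a) 0)^2
      ≤ ∑ a, (ξ a + (r a - pt a))^2 :=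
        Finset.sum_le_sum fun a _ => ptA (R a) (pt a) (r a)
    _ = ∑ a, ((ξ a)^2 - 2 * ξ a * pt a + (r a - pt a)^2) + 2 * ∑ a, ξ a * r a := by
        rw [Finset.mul_sum, ← Finset.sum_add_distrib]
        congr 1; ext a; ring
    _ = ∑ a, ((ξ a)^2 - 2 * ξ a * pt a) + ∑ a, (r a - pt a)^2 := by
        rw [hinner, Finset.sum_add_distrib]; ring
    _ ≤ (∑ a, (max (R a) 0)^2) + ∑ a, (r a - pt a)^2 :=
        add_le_add_left (Finset.sum_le_sum fun a _ => ptB (R a) (pt a)) _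

lemma phi_bound {A : Type*} [Fintype A] (p x : ℕ → A → ℝ) (T : ℕ) :
    ∑ a, (max (prmR p x T a) 0)^2 ≤
      ∑ t ∈ Finset.Icc 1 T, ∑ a, (instRegret (prmSigma p x t) (x t) a - p t a)^2 := by
  induction T with
  | zero => simp [prmR]
  | succ t ih =>
    rw [Finset.sum_Icc_succ_top (by omega : 1 ≤ t + 1)]
    have hs : prmSigma p x (t + 1) = prmSigmaAux (p (t + 1)) (prmR p x t) := by
      simp [prmSigma]
    have := phi_step (p (t + 1)) (x (t + 1)) (prmR p x t)
    rw [← hs] at this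
    calc ∑ a, (max (prmR p x (t + 1) a) 0)^2
        = ∑ a, (max (prmR p x t a +
            instRegret (prmSigma p x (t + 1)) (x (t + 1)) a) 0)^2 := by
          simp only [prmR, hs]
      _ ≤ _ := this
      _ ≤ _ := by gcongr

lemma final_aux {A : Type*} [Fintype A] [Nonempty A] (R : A → ℝ) (S : ℝ)
    (h : ∑ a, (max (R a) 0)^2 ≤ S) :
    Finset.univ.sup' Finset.univ_nonempty (fun a => R a) ≤
      Real.sqrt 2 * Real.sqrt S := by
  rw [Finset.sup'_le_iff]
  intro a _
  have h1 : R a ≤ Real.sqrt (∑ b, (max (R b) 0)^2) := by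
    have e1 : R a ≤ max (R a) 0 := le_max_left _ _
    have e2 : max (R a) 0 = Real.sqrt ((max (R a) 0)^2) :=
      (Real.sqrt_sq (le_max_right _ _)).symm
    have e3 : (max (R a) 0)^2 ≤ ∑ b, (max (R b) 0)^2 :=
      Finset.single_le_sum (f := fun b => (max (R b) 0)^2)
        (fun i _ => by positivity) (Finset.mem_univ a)
    have e4 := Real.sqrt_le_sqrt e3
    linarith [e4, e2 ▸ e1]
  have h2 : Real.sqrt (∑ b, (max (R b) 0)^2) ≤ Real.sqrt S := Real.sqrt_le_sqrt h
  have h3 : (1 : ℝ) ≤ Real.sqrt 2 := by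
    rw [show (1:ℝ) = Real.sqrt 1 by simp]
    exact Real.sqrt_le_sqrt (by norm_num)
  have h4 : Real.sqrt S ≤ Real.sqrt 2 * Real.sqrt S :=
    le_mul_of_one_le_left (Real.sqrt_nonneg _) h3
  linarith

/-- **PRM regret bound (Farina et al., Thm 3).** For every horizon `T` and arbitrary
prediction and reward sequences, the external regret of PRM satisfies
`max_a R^T_a ≤ √2 · (Σ_{t=1}^T ‖r(σ^t, x^t) − p^t‖₂²)^{1/2}`. -/
theorem prm_regret_bound_predictions
    {A : Type*} [Fintype A] [Nonempty A]
    (T : ℕ) (p x : ℕ → A → ℝ) :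
    Finset.univ.sup' Finset.univ_nonempty (fun a => prmR p x T a) ≤
      Real.sqrt 2 *
        Real.sqrt (∑ t ∈ Finset.Icc 1 T,
          ∑ a, (instRegret (prmSigma p x t) (x t) a - p t a) ^ 2) := by
  exact final_aux (prmR p x T) _ (phi_bound p x T)
end

section
/- Let A be a nonempty finite action set and consider predictive regret matching run against an arbitrary reward sequence x^1, …, x^T ∈ ℝ^A. If the predictions are perfect, i.e., p^t = r(σ^t, x^t) for every t = 1, …, T (the prediction made at step t equals the instantaneous regret actually incurred at step t), then the external regret is nonpositive: max_{a∈A} R^T_a ≤ 0. (The paper's claim that a perfect prediction results in zero regret, a consequence of the PRM regret bound.) -/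
open Finset

/-- Key identity: the `ξ`-weighted sum of the instantaneous regret of `stratOf ξ`
vanishes when `∑ ξ > 0`. -/
lemma key_zero {A : Type*} [Fintype A] (ξ x : A → ℝ)
    (hS : 0 < ∑ a, ξ a) :
    ∑ a, ξ a * instRegret (stratOf ξ) x a = 0 := by
  have hS' : (∑ a, ξ a) ≠ 0 := ne_of_gt hS
  simp only [instRegret, stratOf, if_pos hS]
  have hc : ∑ b, (ξ b / ∑ c, ξ c) * x b = (∑ b, ξ b * x b) / ∑ c, ξ c := by
    rw [Finset.sum_div]; exact Finset.sum_congr rfl (fun b _ => by ring)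
  rw [hc]
  have : ∑ a, ξ a * (x a - (∑ b, ξ b * x b) / ∑ c, ξ c)
      = (∑ a, ξ a * x a) - (∑ a, ξ a) * ((∑ b, ξ b * x b) / ∑ c, ξ c) := by
    simp only [mul_sub]
    rw [Finset.sum_sub_distrib, ← Finset.sum_mul]
  rw [this]
  field_simp
  ring

/-- If the PRM predictions are perfect, i.e. `p^t = r(σ^t, x^t)` for all
`t = 1, …, T`, then the external regret is nonpositive. -/
theorem prm_perfect_prediction_zero_regret
    {A : Type*} [Fintype A] [Nonempty A]
    (T : ℕ) (p x : ℕ → A → ℝ)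
    (hp : ∀ t, 1 ≤ t → t ≤ T → p t = instRegret (prmSigma p x t) (x t)) :
    Finset.univ.sup' Finset.univ_nonempty (fun a => prmR p x T a) ≤ 0 := by
  have h : ∀ t, t ≤ T → ∀ a, prmR p x t a ≤ 0 := by
    intro t
    induction t with
    | zero => intro _ a; simp [prmR]
    | succ t ih =>
      intro hle a
      have ihR : ∀ b, prmR p x t b ≤ 0 := ih (Nat.le_of_succ_le hle)
      have hpeq : p (t + 1)
          = instRegret (prmSigmaAux (p (t + 1)) (prmR p x t)) (x (t + 1)) := by
        have := hp (t + 1) (Nat.le_add_left 1 t) hle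
        simpa [prmSigma] using this
      set R : A → ℝ := prmR p x t with hRdef
      set r : A → ℝ := instRegret (prmSigmaAux (p (t + 1)) R) (x (t + 1)) with hrdef
      have hstep : ∀ b, prmR p x (t + 1) b = R b + r b := fun b => rfl
      have hξ : ∀ b, max (R b + p (t + 1) b) 0 = max (R b + r b) 0 := by
        intro b; rw [← hpeq]
      by_cases h0 : 0 < ∑ b, max (R b + p (t + 1) b) 0
      · -- weighted regret identity
        have hkey : ∑ b, max (R b + p (t + 1) b) 0 * r b = 0 := by
          have := key_zero (fun b => max (R b + p (t + 1) b) 0) (x (t + 1)) h0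
          simpa [prmSigmaAux, hrdef] using this
        have hterm : ∀ b ∈ Finset.univ,
            max (R b + r b) 0 ^ 2 ≤ max (R b + p (t + 1) b) 0 * r b := by
          intro b _
          rw [hξ b]
          have h1 : R b + r b ≤ r b := by linarith [ihR b]
          have h2 : 0 ≤ max (R b + r b) 0 := le_max_right _ _
          have h3 : max (R b + r b) 0 ^ 2 ≤ max (R b + r b) 0 * (R b + r b) := by
            rcases le_or_gt (R b + r b) 0 with h | h
            · simp [max_eq_right h]
            · rw [max_eq_left h.le]; nlinarith
          calc max (R b + r b) 0 ^ 2 ≤ max (R b + r b) 0 * (R b + r b) := h3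
            _ ≤ max (R b + r b) 0 * r b := by nlinarith
        have hsum : ∑ b, max (R b + r b) 0 ^ 2 ≤ 0 := by
          calc ∑ b, max (R b + r b) 0 ^ 2
              ≤ ∑ b, max (R b + p (t + 1) b) 0 * r b := Finset.sum_le_sum hterm
            _ = 0 := hkey
        have hzero : max (R a + r a) 0 ^ 2 = 0 := by
          have hnn : ∀ b ∈ Finset.univ, (0:ℝ) ≤ max (R b + r b) 0 ^ 2 :=
            fun b _ => sq_nonneg _
          have := Finset.sum_nonneg hnn
          have hall := (Finset.sum_eq_zero_iff_of_nonneg hnn).mp (le_antisymm hsum this)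
          exact hall a (Finset.mem_univ a)
        have : max (R a + r a) 0 = 0 := by
          have := sq_eq_zero_iff.mp hzero
          exact this
        rw [hstep a]
        have := max_eq_right_iff.mp this
        linarith [le_max_left (R a + r a) 0, this]
      · -- positive part vanishes
        push_neg at h0
        have hnn : ∀ b ∈ Finset.univ, (0:ℝ) ≤ max (R b + p (t + 1) b) 0 :=
          fun b _ => le_max_right _ _
        have hall := (Finset.sum_eq_zero_iff_of_nonneg hnn).mp
          (le_antisymm h0 (Finset.sum_nonneg hnn))
        have := hall a (Finset.mem_univ a)
        rw [hξ a] at this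
        rw [hstep a]
        have h4 : R a + r a ≤ max (R a + r a) 0 := le_max_left _ _
        linarith [h4, this.le]
  exact Finset.sup'_le _ _ (fun a _ => h T le_rfl a)
end
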